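/- Suppose a : ℂ → ℂ^{1×2} and b : ℂ → ℂ^{2×1} are analytic at λ₀, with a(λ₀)b(λ₀) = 0 and a(λ₀)b'(λ₀) ≠ 0, and suppose b satisfies bₓ = U(λ)b and a satisfies aₓ = −aU(λ) for a matrix polynomial U(λ) (with coefficients depending smoothly on x). Let A = b(λ₀)·(a(λ₀)b'(λ₀))⁻¹·a(λ₀). Then A satisfies the matrix Riccati-type equation Aₓ = U₀A − AU₀ − AU₀'A, where U₀ = U(λ₀) and U₀' = (∂U/∂λ)(λ₀); consequently AₓA + AU₀A = 0. -/

import Mathlib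

open Matrix

theorem stmt19 (U₀ U₀' : ℝ → Matrix (Fin 2) (Fin 2) ℂ)
    (a₀ : ℝ → Matrix (Fin 1) (Fin 2) ℂ) (b₀ b₁ : ℝ → Matrix (Fin 2) (Fin 1) ℂ)
    (hab : ∀ x, a₀ x * b₀ x = 0)
    (hΓ : ∀ x, (a₀ x * b₁ x) 0 0 ≠ 0)
    (hb₀ : ∀ x i, HasDerivAt (fun y => b₀ y i 0) ((U₀ x * b₀ x) i 0) x)
    (ha₀ : ∀ x j, HasDerivAt (fun y => a₀ y 0 j) ((-(a₀ x * U₀ x)) 0 j) x)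
    (hb₁ : ∀ x i, HasDerivAt (fun y => b₁ y i 0) ((U₀' x * b₀ x + U₀ x * b₁ x) i 0) x)
    (A : ℝ → Matrix (Fin 2) (Fin 2) ℂ)
    (hA : ∀ x, A x = ((a₀ x * b₁ x) 0 0)⁻¹ • (b₀ x * a₀ x)) :
    ∀ x, (∀ i j, HasDerivAt (fun y => A y i j)
        ((U₀ x * A x - A x * U₀ x - A x * U₀' x * A x) i j) x) ∧
      (U₀ x * A x - A x * U₀ x - A x * U₀' x * A x) * A x + A x * U₀ x * A x = 0 := by
  intro x
  constructor
  · intro i j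
    have hΓx := hΓ x
    have hfun : (fun y => A y i j)
        = fun y => ((a₀ y * b₁ y) 0 0)⁻¹ * (b₀ y * a₀ y) i j := by
      funext y; rw [hA]; simp
    have hP : HasDerivAt (fun y => (b₀ y * a₀ y) i j)
        ((U₀ x * b₀ x) i 0 * a₀ x 0 j + b₀ x i 0 * (-(a₀ x * U₀ x)) 0 j) x := by
      simpa only [Matrix.mul_apply, Fin.sum_univ_one, Pi.mul_def] using (hb₀ x i).mul (ha₀ x j)
    have hΓd : HasDerivAt (fun y => (a₀ y * b₁ y) 0 0)
        ((-(a₀ x * U₀ x)) 0 0 * b₁ x 0 0 + a₀ x 0 0 * (U₀' x * b₀ x + U₀ x * b₁ x) 0 0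
          + ((-(a₀ x * U₀ x)) 0 1 * b₁ x 1 0
            + a₀ x 0 1 * (U₀' x * b₀ x + U₀ x * b₁ x) 1 0)) x := by
      simpa only [Matrix.mul_apply, Fin.sum_univ_two, Pi.mul_def, Pi.add_def] using
        (((ha₀ x 0).mul (hb₁ x 0)).add ((ha₀ x 1).mul (hb₁ x 1)))
    have hinv : HasDerivAt (fun y => ((a₀ y * b₁ y) 0 0)⁻¹)
        (-(((a₀ x * b₁ x) 0 0) ^ 2)⁻¹ * ((-(a₀ x * U₀ x)) 0 0 * b₁ x 0 0
          + a₀ x 0 0 * (U₀' x * b₀ x + U₀ x * b₁ x) 0 0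
          + ((-(a₀ x * U₀ x)) 0 1 * b₁ x 1 0
            + a₀ x 0 1 * (U₀' x * b₀ x + U₀ x * b₁ x) 1 0))) x :=
      (hasDerivAt_inv hΓx).comp x hΓd
    rw [hfun]
    convert hinv.mul hP using 1
    · rfl
    · rfl
    simp only [hA, Matrix.mul_apply, Matrix.sub_apply, Matrix.smul_apply, Matrix.add_apply,
      Matrix.neg_apply, Fin.sum_univ_two, Fin.sum_univ_one, smul_eq_mul]
    have hΓx' : a₀ x 0 0 * b₁ x 0 0 + a₀ x 0 1 * b₁ x 1 0 ≠ 0 := by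
      simpa only [Matrix.mul_apply, Fin.sum_univ_two] using hΓx
    field_simp
    ring
  · have hAA : A x * A x = 0 := by
      rw [hA, smul_mul_assoc, mul_smul_comm]
      rw [Matrix.mul_assoc (b₀ x), ← Matrix.mul_assoc (a₀ x), hab, Matrix.zero_mul,
        Matrix.mul_zero, smul_zero, smul_zero]
    have h1 : (U₀ x * A x - A x * U₀ x - A x * U₀' x * A x) * A x + A x * U₀ x * A x
        = U₀ x * (A x * A x) - A x * U₀' x * (A x * A x) := by noncomm_ring
    rw [h1, hAA, mul_zero, mul_zero, sub_zero]
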